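/- For any copula C on [0,1]^2 (probability measure with uniform marginals) and the comonotone copula M, the Wasserstein-1 distance d_c(M, C) with c(u,v)=|u_1-v_1|+|u_2-v_2| satisfies d_c(M,C) ≤ 1/2, and the bound equals ∫|u_1-u_2| dW(u) where W is the countermonotone copula; in particular the countermonotone copula maximizes d_c(M, ·) over copulas. -/

import Mathlib

open MeasureTheory Set
open scoped ENNReal

/-- The uniform distribution on `[0,1]`. -/
noncomputable def unif : Measure ℝ := volume.restrict (Set.Icc (0:ℝ) 1)

/-- The comonotone copula: the law of `(U,U)` for `U` uniform on `[0,1]`. -/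
noncomputable def Mcop : Measure (ℝ × ℝ) := unif.map (fun u => (u, u))

/-- The countermonotone copula: the law of `(U,1-U)` for `U` uniform on `[0,1]`. -/
noncomputable def Wcop : Measure (ℝ × ℝ) := unif.map (fun u => (u, 1 - u))

/-- Optimal transport cost between measures on `[0,1]²` with cost
`c(u,v) = |u₁-v₁| + |u₂-v₂|` (Wasserstein-1 w.r.t. the `L¹`-metric). -/
noncomputable def transportCost (μ ν : Measure (ℝ × ℝ)) : ℝ≥0∞ :=
  ⨅ (π : Measure ((ℝ × ℝ) × (ℝ × ℝ)))
    (_ : π.map Prod.fst = μ) (_ : π.map Prod.snd = ν),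
    ∫⁻ q, ENNReal.ofReal (|q.1.1 - q.2.1| + |q.1.2 - q.2.2|) ∂π

/-- A (bivariate) copula: a probability measure on `[0,1]²` with uniform marginals. -/
def IsCopula (C : Measure (ℝ × ℝ)) : Prop :=
  IsProbabilityMeasure C ∧ C.map Prod.fst = unif ∧ C.map Prod.snd = unif



lemma integral_abs_one_sub : ∫ u in (0:ℝ)..1, |1 - 2*u| = 1/2 := by
  have hi : ∀ a b : ℝ, IntervalIntegrable (fun u => |1 - 2*u|) volume a b := by
    intro a b
    exact ((continuous_const.sub (continuous_const.mul continuous_id)).abs).intervalIntegrable a b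
  rw [← intervalIntegral.integral_add_adjacent_intervals (hi 0 (1/2)) (hi (1/2) 1)]
  have h1 : ∫ u in (0:ℝ)..(1/2), |1 - 2*u| = 1/4 := by
    have : EqOn (fun u : ℝ => |1 - 2*u|) (fun u => 1 - 2*u) (Set.uIcc (0:ℝ) (1/2)) := by
      intro u hu
      rw [Set.uIcc_of_le (by norm_num)] at hu
      simp only
      exact abs_of_nonneg (by nlinarith [hu.1, hu.2])
    rw [intervalIntegral.integral_congr this,
      intervalIntegral.integral_sub intervalIntegrable_const
        (intervalIntegral.intervalIntegrable_id.const_mul 2),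
      intervalIntegral.integral_const_mul, integral_id,
      intervalIntegral.integral_const]
    norm_num
  have h2 : ∫ u in (1/2:ℝ)..1, |1 - 2*u| = 1/4 := by
    have : EqOn (fun u : ℝ => |1 - 2*u|) (fun u => 2*u - 1) (Set.uIcc (1/2:ℝ) 1) := by
      intro u hu
      rw [Set.uIcc_of_le (by norm_num)] at hu
      simp only
      rw [abs_of_nonpos (by nlinarith [hu.1, hu.2])]; ring
    rw [intervalIntegral.integral_congr this,
      intervalIntegral.integral_sub (intervalIntegral.intervalIntegrable_id.const_mul 2)
        intervalIntegrable_const,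
      intervalIntegral.integral_const_mul, integral_id,
      intervalIntegral.integral_const]
    norm_num
  rw [h1, h2]; norm_num

lemma lintegral_unif_abs : ∫⁻ u, ENNReal.ofReal |1 - 2*u| ∂unif = 1/2 := by
  have hcont : Continuous (fun u : ℝ => |1 - 2*u|) :=
    (continuous_const.sub (continuous_const.mul continuous_id)).abs
  have hint : IntegrableOn (fun u : ℝ => |1 - 2*u|) (Icc 0 1) volume :=
    hcont.integrableOn_Icc
  rw [unif, ← ofReal_integral_eq_lintegral_ofReal hint
    (Filter.Eventually.of_forall fun u => abs_nonneg _)]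
  rw [integral_Icc_eq_integral_Ioc, ← intervalIntegral.integral_of_le (by norm_num : (0:ℝ) ≤ 1),
    integral_abs_one_sub]
  norm_num [ENNReal.ofReal_div_of_pos]

lemma unif_Iic {s : ℝ} (h0 : 0 ≤ s) (h1 : s ≤ 1) : unif (Iic s) = ENNReal.ofReal s := by
  rw [unif, Measure.restrict_apply measurableSet_Iic]
  have : Iic s ∩ Icc 0 1 = Icc 0 s := by
    ext x
    simp only [mem_inter_iff, mem_Iic, mem_Icc]
    constructor
    · rintro ⟨h, h0', _⟩; exact ⟨h0', h⟩
    · rintro ⟨h0', h⟩; exact ⟨h, h0', h.trans h1⟩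
  rw [this, Real.volume_Icc, sub_zero]

lemma unif_Ioi {s : ℝ} (h0 : 0 ≤ s) (h1 : s ≤ 1) : unif (Ioi s) = ENNReal.ofReal (1 - s) := by
  rw [unif, Measure.restrict_apply measurableSet_Ioi]
  have : Ioi s ∩ Icc 0 1 = Ioc s 1 := by
    ext x
    simp only [mem_inter_iff, mem_Ioi, mem_Ioc, mem_Icc]
    constructor
    · rintro ⟨h, _, h1'⟩; exact ⟨h, h1'⟩
    · rintro ⟨h, h1'⟩; exact ⟨h, h0.trans h.le, h1'⟩
  rw [this, Real.volume_Ioc]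

lemma copula_fst_le (C : Measure (ℝ × ℝ)) (hC : IsCopula C) {s : ℝ} (h0 : 0 ≤ s) (h1 : s ≤ 1) :
    C {u : ℝ × ℝ | u.1 ≤ s} = ENNReal.ofReal s := by
  have : {u : ℝ × ℝ | u.1 ≤ s} = Prod.fst ⁻¹' Iic s := rfl
  rw [this, ← Measure.map_apply measurable_fst measurableSet_Iic, hC.2.1, unif_Iic h0 h1]

lemma copula_snd_le (C : Measure (ℝ × ℝ)) (hC : IsCopula C) {s : ℝ} (h0 : 0 ≤ s) (h1 : s ≤ 1) :
    C {u : ℝ × ℝ | u.2 ≤ s} = ENNReal.ofReal s := by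
  have : {u : ℝ × ℝ | u.2 ≤ s} = Prod.snd ⁻¹' Iic s := rfl
  rw [this, ← Measure.map_apply measurable_snd measurableSet_Iic, hC.2.2, unif_Iic h0 h1]

lemma copula_fst_gt (C : Measure (ℝ × ℝ)) (hC : IsCopula C) {s : ℝ} (h0 : 0 ≤ s) (h1 : s ≤ 1) :
    C {u : ℝ × ℝ | s < u.1} = ENNReal.ofReal (1 - s) := by
  have : {u : ℝ × ℝ | s < u.1} = Prod.fst ⁻¹' Ioi s := rfl
  rw [this, ← Measure.map_apply measurable_fst measurableSet_Ioi, hC.2.1, unif_Ioi h0 h1]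

lemma copula_snd_gt (C : Measure (ℝ × ℝ)) (hC : IsCopula C) {s : ℝ} (h0 : 0 ≤ s) (h1 : s ≤ 1) :
    C {u : ℝ × ℝ | s < u.2} = ENNReal.ofReal (1 - s) := by
  have : {u : ℝ × ℝ | s < u.2} = Prod.snd ⁻¹' Ioi s := rfl
  rw [this, ← Measure.map_apply measurable_snd measurableSet_Ioi, hC.2.2, unif_Ioi h0 h1]

lemma copula_ae_mem (C : Measure (ℝ × ℝ)) (hC : IsCopula C) :
    ∀ᵐ u ∂C, u.1 ∈ Icc (0:ℝ) 1 ∧ u.2 ∈ Icc (0:ℝ) 1 := by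
  have h1 : C (Prod.fst ⁻¹' (Icc (0:ℝ) 1)ᶜ) = 0 := by
    rw [← Measure.map_apply measurable_fst measurableSet_Icc.compl, hC.2.1, unif,
      Measure.restrict_apply measurableSet_Icc.compl]
    simp
  have h2 : C (Prod.snd ⁻¹' (Icc (0:ℝ) 1)ᶜ) = 0 := by
    rw [← Measure.map_apply measurable_snd measurableSet_Icc.compl, hC.2.2, unif,
      Measure.restrict_apply measurableSet_Icc.compl]
    simp
  have e1 : ∀ᵐ u ∂C, u.1 ∈ Icc (0:ℝ) 1 := by
    have e : {u : ℝ × ℝ | ¬ u.1 ∈ Icc (0:ℝ) 1} = Prod.fst ⁻¹' (Icc (0:ℝ) 1)ᶜ := rfl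
    rw [ae_iff, e]; exact h1

  have e2 : ∀ᵐ u ∂C, u.2 ∈ Icc (0:ℝ) 1 := by
    have e : {u : ℝ × ℝ | ¬ u.2 ∈ Icc (0:ℝ) 1} = Prod.snd ⁻¹' (Icc (0:ℝ) 1)ᶜ := rfl
    rw [ae_iff, e]; exact h2

  exact e1.and e2

lemma footrule (C : Measure (ℝ × ℝ)) (hC : IsCopula C) :
    ∫⁻ u, ENNReal.ofReal |u.1 - u.2| ∂C ≤ 1/2 := by
  haveI := hC.1
  set ν : Measure ℝ := volume.restrict (Ioo 0 1) with hν
  set f : ℝ × ℝ → ℝ → ℝ≥0∞ := fun u s =>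
    if (u.1 ≤ s ∧ s < u.2) ∨ (u.2 ≤ s ∧ s < u.1) then 1 else 0 with hf
  have hDm : ∀ s : ℝ, MeasurableSet {u : ℝ × ℝ | (u.1 ≤ s ∧ s < u.2) ∨ (u.2 ≤ s ∧ s < u.1)} := by
    intro s
    exact ((measurableSet_le measurable_fst measurable_const).inter
        (measurableSet_lt measurable_const measurable_snd)).union
      ((measurableSet_le measurable_snd measurable_const).inter
        (measurableSet_lt measurable_const measurable_fst))
  have hfm : Measurable (Function.uncurry f) := by
    apply Measurable.ite _ measurable_const measurable_const
    exact ((measurableSet_le measurable_fst.fst measurable_snd).inter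
        (measurableSet_lt measurable_snd measurable_fst.snd)).union
      ((measurableSet_le measurable_fst.snd measurable_snd).inter
        (measurableSet_lt measurable_snd measurable_fst.fst))
  have step1 : ∀ᵐ u ∂C, ENNReal.ofReal |u.1 - u.2| = ∫⁻ s, f u s ∂ν := by
    filter_upwards [copula_ae_mem C hC] with u hu
    set m := min u.1 u.2
    set M := max u.1 u.2
    have hset : {s : ℝ | (u.1 ≤ s ∧ s < u.2) ∨ (u.2 ≤ s ∧ s < u.1)} = Ico m M := by
      ext s
      simp only [mem_setOf_eq, mem_Ico]
      rcases le_total u.1 u.2 with h | h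
      · constructor
        · rintro (⟨a, b⟩ | ⟨a, b⟩)
          · exact ⟨le_trans (min_le_left _ _) a, lt_of_lt_of_le b (le_max_right _ _)⟩
          · exact ⟨le_trans (min_le_right _ _) a, lt_of_lt_of_le b (le_max_left _ _)⟩
        · rintro ⟨a, b⟩
          left
          refine ⟨le_trans (by simp [m, min_eq_left h]) a, lt_of_lt_of_le b (by simp [M, max_eq_right h])⟩
      · constructor
        · rintro (⟨a, b⟩ | ⟨a, b⟩)
          · exact ⟨le_trans (min_le_left _ _) a, lt_of_lt_of_le b (le_max_right _ _)⟩
          · exact ⟨le_trans (min_le_right _ _) a, lt_of_lt_of_le b (le_max_left _ _)⟩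
        · rintro ⟨a, b⟩
          right
          refine ⟨le_trans (by simp [m, min_eq_right h]) a, lt_of_lt_of_le b (by simp [M, max_eq_left h])⟩
    have hfind : f u = (Ico m M).indicator (fun _ => (1:ℝ≥0∞)) := by
      funext s
      rw [hf]
      simp only [Set.indicator_apply]
      by_cases hs : s ∈ Ico m M
      · rw [if_pos, if_pos hs]
        rw [← hset] at hs; exact hs
      · rw [if_neg, if_neg hs]
        rw [← hset] at hs; exact hs
    rw [hfind, lintegral_indicator measurableSet_Ico _, setLIntegral_one,
      hν, Measure.restrict_apply measurableSet_Ico]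
    have hvol : volume (Ico m M ∩ Ioo 0 1) = ENNReal.ofReal (M - m) := by
      apply le_antisymm
      · calc volume (Ico m M ∩ Ioo 0 1) ≤ volume (Ico m M) := measure_mono inter_subset_left
          _ = ENNReal.ofReal (M - m) := Real.volume_Ico
      · calc ENNReal.ofReal (M - m) = volume (Ioo m M) := Real.volume_Ioo.symm
          _ ≤ volume (Ico m M ∩ Ioo 0 1) := by
              apply measure_mono
              apply subset_inter Ioo_subset_Ico_self
              intro x hx
              constructor
              · exact lt_of_le_of_lt (le_min hu.1.1 hu.2.1) hx.1
              · exact lt_of_lt_of_le hx.2 (max_le hu.1.2 hu.2.2)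
    rw [hvol, max_sub_min_eq_abs, abs_sub_comm]
  rw [lintegral_congr_ae step1, lintegral_lintegral_swap hfm.aemeasurable]
  have inner : ∀ s : ℝ, ∫⁻ u, f u s ∂C = C {u : ℝ × ℝ | (u.1 ≤ s ∧ s < u.2) ∨ (u.2 ≤ s ∧ s < u.1)} := by
    intro s
    have : (fun u => f u s) = ({u : ℝ × ℝ | (u.1 ≤ s ∧ s < u.2) ∨ (u.2 ≤ s ∧ s < u.1)}).indicator
        (fun _ => (1:ℝ≥0∞)) := by
      funext u
      simp only [hf, Set.indicator_apply, mem_setOf_eq]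
    rw [this, lintegral_indicator (hDm s) _, setLIntegral_one]
  have hsplit : Ioo (0:ℝ) 1 = Ioc 0 (1/2) ∪ Ioo (1/2) 1 := by
    ext x
    simp only [mem_Ioo, mem_Ioc, mem_union]
    constructor
    · rintro ⟨a, b⟩
      rcases le_or_gt x (1/2) with h | h
      · exact Or.inl ⟨a, h⟩
      · exact Or.inr ⟨h, b⟩
    · rintro (⟨a, b⟩ | ⟨a, b⟩)
      · exact ⟨a, lt_of_le_of_lt b (by norm_num)⟩
      · exact ⟨lt_trans (by norm_num) a, b⟩
  have hdisj : Disjoint (Ioc (0:ℝ) (1/2)) (Ioo (1/2) 1) := by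
    apply Set.disjoint_left.mpr
    rintro x ⟨_, h1⟩ ⟨h2, _⟩
    exact absurd h1 (not_le.mpr h2)
  rw [hν, hsplit, Measure.restrict_union hdisj measurableSet_Ioo, lintegral_add_measure]
  have b1 : ∫⁻ s in Ioc (0:ℝ) (1/2), ∫⁻ u, f u s ∂C ∂volume ≤ ENNReal.ofReal (1/4) := by
    have hb : ∀ s ∈ Ioc (0:ℝ) (1/2), ∫⁻ u, f u s ∂C ≤ ENNReal.ofReal (2*s) := by
      intro s hs
      rw [inner s]
      calc C {u : ℝ × ℝ | (u.1 ≤ s ∧ s < u.2) ∨ (u.2 ≤ s ∧ s < u.1)}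
          ≤ C ({u : ℝ × ℝ | u.1 ≤ s} ∪ {u : ℝ × ℝ | u.2 ≤ s}) := by
            apply measure_mono
            rintro u (⟨a, _⟩ | ⟨a, _⟩)
            · exact Or.inl a
            · exact Or.inr a
        _ ≤ C {u : ℝ × ℝ | u.1 ≤ s} + C {u : ℝ × ℝ | u.2 ≤ s} := measure_union_le _ _
        _ = ENNReal.ofReal (2*s) := by
            rw [copula_fst_le C hC hs.1.le (le_trans hs.2 (by norm_num)),
              copula_snd_le C hC hs.1.le (le_trans hs.2 (by norm_num)),
              ← ENNReal.ofReal_add hs.1.le hs.1.le]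
            ring_nf
    calc ∫⁻ s in Ioc (0:ℝ) (1/2), ∫⁻ u, f u s ∂C ∂volume
        ≤ ∫⁻ s in Ioc (0:ℝ) (1/2), ENNReal.ofReal (2*s) ∂volume :=
          setLIntegral_mono (by fun_prop) hb
      _ = ENNReal.ofReal (1/4) := by
          rw [← ofReal_integral_eq_lintegral_ofReal
            (show IntegrableOn (fun s : ℝ => 2*s) (Ioc 0 (1/2)) volume from (continuous_const.mul continuous_id').integrableOn_Ioc)
            ((ae_restrict_iff' measurableSet_Ioc).mpr
              (Filter.Eventually.of_forall fun s hs => by simp only [Pi.zero_apply]; linarith [hs.1]))]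
          congr 1
          rw [← intervalIntegral.integral_of_le (by norm_num : (0:ℝ) ≤ 1/2),
            intervalIntegral.integral_const_mul, integral_id]
          norm_num
  have b2 : ∫⁻ s in Ioo (1/2:ℝ) 1, ∫⁻ u, f u s ∂C ∂volume ≤ ENNReal.ofReal (1/4) := by
    have hb : ∀ s ∈ Ioo (1/2:ℝ) 1, ∫⁻ u, f u s ∂C ≤ ENNReal.ofReal (2 - 2*s) := by
      intro s hs
      have hs0 : (0:ℝ) ≤ s := le_trans (by norm_num) hs.1.le
      have hs1 : s ≤ 1 := hs.2.le
      rw [inner s]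
      calc C {u : ℝ × ℝ | (u.1 ≤ s ∧ s < u.2) ∨ (u.2 ≤ s ∧ s < u.1)}
          ≤ C ({u : ℝ × ℝ | s < u.2} ∪ {u : ℝ × ℝ | s < u.1}) := by
            apply measure_mono
            rintro u (⟨_, b⟩ | ⟨_, b⟩)
            · exact Or.inl b
            · exact Or.inr b
        _ ≤ C {u : ℝ × ℝ | s < u.2} + C {u : ℝ × ℝ | s < u.1} := measure_union_le _ _
        _ = ENNReal.ofReal (2 - 2*s) := by
            rw [copula_snd_gt C hC hs0 hs1, copula_fst_gt C hC hs0 hs1,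
              ← ENNReal.ofReal_add (by linarith) (by linarith)]
            ring_nf
    calc ∫⁻ s in Ioo (1/2:ℝ) 1, ∫⁻ u, f u s ∂C ∂volume
        ≤ ∫⁻ s in Ioo (1/2:ℝ) 1, ENNReal.ofReal (2 - 2*s) ∂volume :=
          setLIntegral_mono (by fun_prop) hb
      _ = ENNReal.ofReal (1/4) := by
          rw [← ofReal_integral_eq_lintegral_ofReal
            (show IntegrableOn (fun s : ℝ => 2 - 2*s) (Ioo (1/2) 1) volume from (continuous_const.sub (continuous_const.mul continuous_id')).integrableOn_Icc.mono_set Ioo_subset_Icc_self)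
            ((ae_restrict_iff' measurableSet_Ioo).mpr
              (Filter.Eventually.of_forall fun s hs => by simp only [Pi.zero_apply]; linarith [hs.2]))]
          congr 1
          rw [Measure.restrict_congr_set Ioo_ae_eq_Ioc,
            ← intervalIntegral.integral_of_le (by norm_num : (1/2:ℝ) ≤ 1),
            intervalIntegral.integral_sub intervalIntegrable_const
              (intervalIntegral.intervalIntegrable_id.const_mul 2),
            intervalIntegral.integral_const_mul, integral_id,
            intervalIntegral.integral_const]
          norm_num
  calc ∫⁻ s in Ioc (0:ℝ) (1/2), ∫⁻ u, f u s ∂C ∂volume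
        + ∫⁻ s in Ioo (1/2:ℝ) 1, ∫⁻ u, f u s ∂C ∂volume
      ≤ ENNReal.ofReal (1/4) + ENNReal.ofReal (1/4) := add_le_add b1 b2
    _ = 1/2 := by
        rw [← ENNReal.ofReal_add (by norm_num) (by norm_num)]
        norm_num [ENNReal.ofReal_div_of_pos]

lemma costFun_measurable :
    Measurable (fun q : (ℝ × ℝ) × (ℝ × ℝ) => ENNReal.ofReal (|q.1.1 - q.2.1| + |q.1.2 - q.2.2|)) :=
  ((measurable_fst.fst.sub measurable_snd.fst).abs.add
    (measurable_fst.snd.sub measurable_snd.snd).abs).ennreal_ofReal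

lemma measurable_Wmap : Measurable (fun u : ℝ => (u, 1 - u)) := by fun_prop
lemma measurable_Mmap : Measurable (fun u : ℝ => (u, u)) := by fun_prop

lemma lintegral_Wcop_abs : ∫⁻ u, ENNReal.ofReal |u.1 - u.2| ∂Wcop = 1/2 := by
  rw [Wcop, lintegral_map (show Measurable (fun u : ℝ × ℝ => ENNReal.ofReal |u.1 - u.2|) from (measurable_fst.sub measurable_snd).abs.ennreal_ofReal)
    measurable_Wmap]
  have : ∀ u : ℝ, ENNReal.ofReal |u - (1 - u)| = ENNReal.ofReal |1 - 2*u| := by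
    intro u
    rw [abs_sub_comm]
    congr 1
    ring
  simp only [this]
  exact lintegral_unif_abs

lemma half_le_cost (π : Measure ((ℝ × ℝ) × (ℝ × ℝ)))
    (h1 : π.map Prod.fst = Mcop) (h2 : π.map Prod.snd = Wcop) :
    1/2 ≤ ∫⁻ q, ENNReal.ofReal (|q.1.1 - q.2.1| + |q.1.2 - q.2.2|) ∂π := by
  have hm1 : MeasurableSet {u : ℝ × ℝ | u.1 = u.2} :=
    measurableSet_eq_fun measurable_fst measurable_snd
  have hm2 : MeasurableSet {u : ℝ × ℝ | u.1 + u.2 = 1} :=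
    measurableSet_eq_fun (measurable_fst.add measurable_snd) measurable_const
  have e1 : ∀ᵐ q ∂π, q.1.1 = q.1.2 := by
    rw [ae_iff]
    have : {q : (ℝ × ℝ) × (ℝ × ℝ) | ¬ q.1.1 = q.1.2} = Prod.fst ⁻¹' {u : ℝ × ℝ | u.1 = u.2}ᶜ := rfl
    rw [this, ← Measure.map_apply measurable_fst hm1.compl, h1, Mcop,
      Measure.map_apply measurable_Mmap hm1.compl]
    convert measure_empty
    · ext u; simp
    · infer_instance
  have e2 : ∀ᵐ q ∂π, q.2.1 + q.2.2 = 1 := by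
    rw [ae_iff]
    have : {q : (ℝ × ℝ) × (ℝ × ℝ) | ¬ q.2.1 + q.2.2 = 1}
        = Prod.snd ⁻¹' {u : ℝ × ℝ | u.1 + u.2 = 1}ᶜ := rfl
    rw [this, ← Measure.map_apply measurable_snd hm2.compl, h2, Wcop,
      Measure.map_apply measurable_Wmap hm2.compl]
    convert measure_empty
    · ext u; simp
    · infer_instance
  have key : ∫⁻ q, ENNReal.ofReal |1 - 2*q.2.1| ∂π
      ≤ ∫⁻ q, ENNReal.ofReal (|q.1.1 - q.2.1| + |q.1.2 - q.2.2|) ∂π := by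
    apply lintegral_mono_ae
    filter_upwards [e1, e2] with q hq1 hq2
    apply ENNReal.ofReal_le_ofReal
    have : (1 : ℝ) - 2*q.2.1 = (q.1.1 - q.2.1) - (q.1.2 - q.2.2) := by
      rw [← hq1]; linarith
    calc |1 - 2*q.2.1| = |(q.1.1 - q.2.1) + (-(q.1.2 - q.2.2))| := by rw [this]; ring_nf
      _ ≤ |q.1.1 - q.2.1| + |(-(q.1.2 - q.2.2))| := abs_add_le _ _
      _ = |q.1.1 - q.2.1| + |q.1.2 - q.2.2| := by rw [abs_neg]
  refine le_trans (le_of_eq ?_) key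
  have hg : Measurable (fun v : ℝ × ℝ => ENNReal.ofReal |1 - 2*v.1|) :=
    ((continuous_const.sub (continuous_const.mul continuous_fst)).abs).measurable.ennreal_ofReal
  have : ∫⁻ q, ENNReal.ofReal |1 - 2*q.2.1| ∂π
      = ∫⁻ v, ENNReal.ofReal |1 - 2*v.1| ∂(π.map Prod.snd) := by
    rw [lintegral_map hg measurable_snd]
  rw [this, h2, Wcop, lintegral_map hg measurable_Wmap]
  exact lintegral_unif_abs.symm

lemma half_le_transport : 1/2 ≤ transportCost Mcop Wcop := by
  rw [transportCost]
  exact le_iInf fun π => le_iInf fun h1 => le_iInf fun h2 => half_le_cost π h1 h2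

lemma transport_le_footrule (C : Measure (ℝ × ℝ)) (hfst : C.map Prod.fst = unif) :
    transportCost Mcop C ≤ ∫⁻ u, ENNReal.ofReal |u.1 - u.2| ∂C := by
  set g : ℝ × ℝ → (ℝ × ℝ) × (ℝ × ℝ) := fun u => ((u.1, u.1), (u.1, u.2)) with hgdef
  have hg : Measurable g := by fun_prop
  have h1 : (C.map g).map Prod.fst = Mcop := by
    rw [Measure.map_map measurable_fst hg]
    have : Prod.fst ∘ g = (fun x : ℝ => (x, x)) ∘ Prod.fst := rfl
    rw [this, ← Measure.map_map measurable_Mmap measurable_fst, hfst, Mcop]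
  have h2 : (C.map g).map Prod.snd = C := by
    rw [Measure.map_map measurable_snd hg]
    have : Prod.snd ∘ g = id := rfl
    rw [this, Measure.map_id]
  have hcost : ∫⁻ q, ENNReal.ofReal (|q.1.1 - q.2.1| + |q.1.2 - q.2.2|) ∂(C.map g)
      = ∫⁻ u, ENNReal.ofReal |u.1 - u.2| ∂C := by
    rw [lintegral_map costFun_measurable hg]
    apply lintegral_congr
    intro u
    simp [hgdef]
  rw [transportCost]
  refine le_trans (iInf_le_of_le (C.map g) (iInf_le_of_le h1 (iInf_le_of_le h2 le_rfl))) ?_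
  rw [hcost]

/-- For any copula `C`, `d_c(M,C) ≤ 1/2`; the bound `1/2` equals
`∫ |u₁-u₂| dW(u)` for the countermonotone copula `W`; in particular the countermonotone
copula maximizes `d_c(M,·)` over copulas. -/
theorem transportCost_comonotone_le_half
    (C : Measure (ℝ × ℝ)) (hC : IsCopula C) :
    transportCost Mcop C ≤ 1 / 2 ∧
    (1 / 2 : ℝ≥0∞) = ∫⁻ u, ENNReal.ofReal |u.1 - u.2| ∂Wcop ∧
    transportCost Mcop C ≤ transportCost Mcop Wcop := by
  refine ⟨(transport_le_footrule C hC.2.1).trans (footrule C hC), lintegral_Wcop_abs.symm, ?_⟩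
  exact le_trans ((transport_le_footrule C hC.2.1).trans (footrule C hC)) half_le_transport
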